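/- Let R be a ring, let D and E be division rings equipped with ring homomorphisms from R, and let φ : R^n → R^m be an R-linear map between finitely generated free R-modules. If the scalar-extended map E ⊗_R φ : E ⊗_R R^n → E ⊗_R R^m is injective and dim_D(D ⊗_R L) ≤ dim_E(E ⊗_R L) holds for every finitely presented R-module L, then D ⊗_R φ is also injective. -/

import Mathlib

/-- The extension of scalars, along a ring homomorphism `f : R → D` into a division ring, of the
`R`-linear map `R^n → R^m` given by right multiplication by the matrix `A`; under the canonical
identification `D ⊗_R R^k ≅ D^k` it is the `D`-linear map `v ↦ v ⬝ f(A)`. -/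
def extMap {R D : Type*} [Ring R] [DivisionRing D] (f : R →+* D)
    {n m : ℕ} (A : Matrix (Fin n) (Fin m) R) : (Fin n → D) →ₗ[D] (Fin m → D) where
  toFun v := Matrix.vecMul v (A.map f)
  map_add' x y := by
    ext j
    simp [Matrix.vecMul, dotProduct, add_mul, Finset.sum_add_distrib]
  map_smul' d v := by
    ext j
    simp [Matrix.vecMul, dotProduct, Finset.mul_sum, mul_assoc]

/-- `dim_D (D ⊗_R L)` for the finitely presented `R`-module `L` presented as the cokernel of the
matrix `A`: it is the `D`-dimension of the cokernel of the extended map. -/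
noncomputable def extDim {R D : Type*} [Ring R] [DivisionRing D] (f : R →+* D)
    {n m : ℕ} (A : Matrix (Fin n) (Fin m) R) : Cardinal :=
  Module.rank D ((Fin m → D) ⧸ LinearMap.range (extMap f A))

/-- Let `D`, `E` be division `R`-rings and `φ : R^n → R^m` an `R`-linear map (given by a matrix
`A`).  If `dim_D (D ⊗_R L) ≤ dim_E (E ⊗_R L)` for every finitely presented `R`-module `L`
(equivalently, for every cokernel of a matrix over `R`) and `E ⊗_R φ` is injective, then
`D ⊗_R φ` is injective. -/
theorem stmt1 {R : Type*} {D E : Type u} [Ring R] [DivisionRing D] [DivisionRing E]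
    (fD : R →+* D) (fE : R →+* E) {n m : ℕ} (A : Matrix (Fin n) (Fin m) R)
    (hdim : ∀ (a b : ℕ) (B : Matrix (Fin a) (Fin b) R), extDim fD B ≤ extDim fE B)
    (hE : Function.Injective (extMap fE A)) :
    Function.Injective (extMap fD A) := by
  -- Work with finite ranks.
  have hq : ∀ {K : Type u} [DivisionRing K] (f : R →+* K),
      Module.finrank K ((Fin m → K) ⧸ LinearMap.range (extMap f A))
        + Module.finrank K (LinearMap.range (extMap f A)) = m := by
    intro K _ f
    rw [Submodule.finrank_quotient_add_finrank]
    simp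
  have hrkE : Module.finrank E (LinearMap.range (extMap fE A)) = n := by
    rw [LinearMap.finrank_range_of_inj hE]
    simp
  have hdim' : Module.finrank D ((Fin m → D) ⧸ LinearMap.range (extMap fD A))
      ≤ Module.finrank E ((Fin m → E) ⧸ LinearMap.range (extMap fE A)) := by
    have := hdim n m A
    unfold extDim at this
    rwa [← Module.finrank_eq_rank, ← Module.finrank_eq_rank, Nat.cast_le] at this
  have hD := hq fD
  have hE' := hq fE
  have hle : n ≤ Module.finrank D (LinearMap.range (extMap fD A)) := by omega
  have hrn : Module.finrank D (LinearMap.range (extMap fD A))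
      + Module.finrank D (LinearMap.ker (extMap fD A)) = n := by
    rw [LinearMap.finrank_range_add_finrank_ker]
    simp
  have hker : Module.finrank D (LinearMap.ker (extMap fD A)) = 0 := by omega
  rw [← LinearMap.ker_eq_bot]
  exact Submodule.finrank_eq_zero.mp hker
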